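/- Let a > 0, κ > 0, β > 0. Then there exists u₀ > 0 such that the solution u(·; u₀) of u' = v/√(1+v²), v' = κu with u(0) = u₀, v(0) = 0 satisfies u'(a; u₀) = tanh β. -/

import Mathlib

open Set Real

noncomputable def capg (x : ℝ) : ℝ := x / Real.sqrt (1 + x ^ 2)

lemma capg_sqrt_pos (x : ℝ) : 0 < Real.sqrt (1 + x ^ 2) :=
  Real.sqrt_pos.2 (by positivity)

lemma capg_sqrt_one_le (x : ℝ) : 1 ≤ Real.sqrt (1 + x ^ 2) := by
  have h := Real.sq_sqrt (by positivity : (0:ℝ) ≤ 1 + x ^ 2)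
  nlinarith [Real.sqrt_nonneg (1 + x ^ 2)]

lemma capg_hasDerivAt (x : ℝ) :
    HasDerivAt capg
      ((1 * Real.sqrt (1 + x ^ 2) - x * (2 * x / (2 * Real.sqrt (1 + x ^ 2)))) /
        Real.sqrt (1 + x ^ 2) ^ 2) x := by
  have hinner : HasDerivAt (fun y : ℝ => 1 + y ^ 2) (2 * x) x := by
    simpa using ((hasDerivAt_pow 2 x).const_add 1)
  have hs : HasDerivAt (fun y : ℝ => Real.sqrt (1 + y ^ 2))
      (2 * x / (2 * Real.sqrt (1 + x ^ 2))) x :=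
    hinner.sqrt (by positivity)
  exact (hasDerivAt_id x).div hs (ne_of_gt (capg_sqrt_pos x))

lemma capg_deriv (x : ℝ) : deriv capg x = 1 / Real.sqrt (1 + x ^ 2) ^ 3 := by
  rw [(capg_hasDerivAt x).deriv]
  have hs := capg_sqrt_pos x
  have h2 : Real.sqrt (1 + x ^ 2) ^ 2 = 1 + x ^ 2 :=
    Real.sq_sqrt (by positivity)
  have hnum : 1 * Real.sqrt (1 + x ^ 2) - x * (2 * x / (2 * Real.sqrt (1 + x ^ 2)))
      = 1 / Real.sqrt (1 + x ^ 2) := by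
    rw [eq_div_iff hs.ne']
    field_simp
    ring_nf
    linarith
  rw [hnum]
  rw [div_div, ← pow_succ']

lemma capg_strictMono : StrictMono capg :=
  strictMono_of_deriv_pos fun x => by
    rw [capg_deriv]; positivity

lemma capg_lipschitz : LipschitzWith 1 capg := by
  apply lipschitzWith_of_nnnorm_deriv_le (fun x => (capg_hasDerivAt x).differentiableAt)
  intro x
  have h1 := capg_sqrt_one_le x
  have h0 := capg_sqrt_pos x
  have hb : |deriv capg x| ≤ 1 := by
    rw [capg_deriv, abs_of_nonneg (by positivity)]
    rw [div_le_one (by positivity)]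
    calc (1:ℝ) = 1 ^ 3 := by norm_num
      _ ≤ Real.sqrt (1 + x ^ 2) ^ 3 := pow_le_pow_left₀ zero_le_one h1 3
  simpa only [← NNReal.coe_le_coe, coe_nnnorm, NNReal.coe_one, Real.norm_eq_abs] using hb

lemma capg_sinh (β : ℝ) : capg (Real.sinh β) = Real.tanh β := by
  unfold capg
  rw [show (1 : ℝ) + Real.sinh β ^ 2 = Real.cosh β ^ 2 by
        have := Real.cosh_sq β; linarith,
      Real.sqrt_sq (Real.cosh_pos β).le, Real.tanh_eq_sinh_div_cosh]

/-- Existence for the capillary boundary problem: contact angle β at r = a. -/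
theorem stmt_13 (κ a β : ℝ) (hκ : 0 < κ) (ha : 0 < a) (hβ : 0 < β)
    (U V : ℝ → ℝ → ℝ)
    (hU : ∀ u₀ : ℝ, ∀ r : ℝ,
      HasDerivAt (U u₀) (V u₀ r / Real.sqrt (1 + V u₀ r ^ 2)) r)
    (hV : ∀ u₀ : ℝ, ∀ r : ℝ, HasDerivAt (V u₀) (κ * U u₀ r) r)
    (hU0 : ∀ u₀ : ℝ, U u₀ 0 = u₀) (hV0 : ∀ u₀ : ℝ, V u₀ 0 = 0) :
    ∃ u₀ : ℝ, 0 < u₀ ∧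
      V u₀ a / Real.sqrt (1 + V u₀ a ^ 2) = Real.tanh β := by
  -- the vector field
  set f : ℝ → ℝ × ℝ → ℝ × ℝ := fun _ p => (capg p.2, κ * p.1) with hf_def
  have hU' : ∀ u₀ r, HasDerivAt (U u₀) (capg (V u₀ r)) r := hU
  -- Lipschitz constant
  set K : NNReal := max 1 κ.toNNReal with hK_def
  have hKlip : ∀ t : ℝ, LipschitzWith K (f t) := by
    intro t
    have h1 : LipschitzWith 1 (fun p : ℝ × ℝ => capg p.2) := by
      simpa [Function.comp_def] using capg_lipschitz.comp (LipschitzWith.prod_snd (α := ℝ) (β := ℝ))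
    have h2 : LipschitzWith κ.toNNReal (fun p : ℝ × ℝ => κ * p.1) := by
      apply LipschitzWith.of_dist_le_mul
      intro p q
      have : dist (κ * p.1) (κ * q.1) = κ * dist p.1 q.1 := by
        rw [Real.dist_eq, Real.dist_eq, ← mul_sub, abs_mul, abs_of_pos hκ]
      rw [this, Real.coe_toNNReal κ hκ.le]
      have hfst : dist p.1 q.1 ≤ dist p q := by
        rw [Prod.dist_eq]; exact le_max_left _ _
      exact mul_le_mul_of_nonneg_left hfst hκ.le
    exact h1.prodMk h2
  -- flow
  set P : ℝ → ℝ → ℝ × ℝ := fun u₀ r => (U u₀ r, V u₀ r) with hP_def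
  have hP : ∀ u₀ r, HasDerivAt (P u₀) (f r (P u₀ r)) r := fun u₀ r =>
    (hU' u₀ r).prodMk (hV u₀ r)
  have hPcont : ∀ u₀, Continuous (P u₀) := fun u₀ =>
    continuous_iff_continuousAt.2 fun r => (hP u₀ r).continuousAt
  have hP0 : ∀ u₀, P u₀ 0 = (u₀, 0) := fun u₀ => by
    simp [hP_def, hU0, hV0]
  -- continuity of u₀ ↦ V u₀ a via Gronwall
  have hφlip : ∀ t₁ t₂ : ℝ,
      dist (V t₁ a) (V t₂ a) ≤ Real.exp (K * a) * dist t₁ t₂ := by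
    intro t₁ t₂
    have key := dist_le_of_trajectories_ODE (v := f) (K := K) (δ := dist t₁ t₂) hKlip
      ((hPcont t₁).continuousOn) (fun t _ => (hP t₁ t).hasDerivWithinAt)
      ((hPcont t₂).continuousOn) (fun t _ => (hP t₂ t).hasDerivWithinAt)
      (by
        rw [hP0, hP0, Prod.dist_eq]
        simp [le_max_iff, dist_nonneg]) a (Set.mem_Icc.2 ⟨ha.le, le_rfl⟩)
    calc dist (V t₁ a) (V t₂ a) ≤ dist (P t₁ a) (P t₂ a) := by
          rw [Prod.dist_eq]; exact le_max_right _ _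
      _ ≤ dist t₁ t₂ * Real.exp (K * (a - 0)) := key
      _ = Real.exp (K * a) * dist t₁ t₂ := by rw [sub_zero, mul_comm]
  have hφcont : Continuous (fun t => V t a) := by
    apply (LipschitzWith.of_dist_le_mul (K := (Real.exp (K * a)).toNNReal)
      (f := fun t => V t a) ?_).continuous
    intro t₁ t₂
    rw [Real.coe_toNNReal _ (Real.exp_nonneg _)]
    exact hφlip t₁ t₂
  -- V 0 a = 0 via uniqueness
  have hV0a : V 0 a = 0 := by
    have huniq := ODE_solution_unique_of_mem_Icc_right (v := f) (K := K)
      (s := fun _ => (univ : Set (ℝ × ℝ)))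
      (fun t _ => (hKlip t).lipschitzOnWith)
      ((hPcont 0).continuousOn) (fun t _ => (hP 0 t).hasDerivWithinAt)
      (fun t _ => trivial)
      (continuous_const.continuousOn : ContinuousOn (fun _ : ℝ => ((0 : ℝ), (0 : ℝ))) (Icc 0 a))
      (fun t _ => by
        have : f t ((0 : ℝ), (0 : ℝ)) = ((0 : ℝ), (0 : ℝ)) := by
          simp [hf_def, capg]
        rw [this]
        exact (hasDerivAt_const t _).hasDerivWithinAt)
      (fun t _ => trivial)
      (hP0 0)
    have := huniq (Set.mem_Icc.2 ⟨ha.le, le_rfl⟩)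
    have h2 : P 0 a = ((0 : ℝ), (0 : ℝ)) := this
    have := congrArg Prod.snd h2
    simpa [hP_def] using this
  -- choose large initial value M
  set M : ℝ := (Real.sinh β + 1) / (κ * a) with hM_def
  have hsinh : 0 < Real.sinh β := Real.sinh_pos_iff.2 hβ
  have hM : 0 < M := div_pos (by linarith) (by positivity)
  -- energy conservation for initial value M : (U M r)^2 ≥ M^2
  have hsq : ∀ r, M ^ 2 ≤ U M r ^ 2 := by
    intro r
    set E : ℝ → ℝ := fun r => Real.sqrt (1 + V M r ^ 2) - κ * U M r ^ 2 / 2 with hE_def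
    have hE' : ∀ x, HasDerivAt E 0 x := by
      intro x
      have hs0 := capg_sqrt_pos (V M x)
      have hinner : HasDerivAt (fun y => 1 + V M y ^ 2)
          (2 * V M x ^ 1 * (κ * U M x)) x := ((hV M x).pow 2).const_add 1
      have h1 : HasDerivAt (fun y => Real.sqrt (1 + V M y ^ 2))
          (2 * V M x ^ 1 * (κ * U M x) / (2 * Real.sqrt (1 + V M x ^ 2))) x :=
        hinner.sqrt (by positivity)
      have h2 : HasDerivAt (fun y => κ * U M y ^ 2 / 2)
          (κ * (2 * U M x ^ 1 * capg (V M x)) / 2) x :=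
        (((hU' M x).pow 2).const_mul κ).div_const 2
      have h0 : 2 * V M x ^ 1 * (κ * U M x) / (2 * Real.sqrt (1 + V M x ^ 2)) -
          κ * (2 * U M x ^ 1 * capg (V M x)) / 2 = 0 := by
        unfold capg
        field_simp
        ring
      have := h1.sub h2
      rwa [h0] at this
    have hconst : E r = E 0 :=
      is_const_of_deriv_eq_zero (fun x => (hE' x).differentiableAt)
        (fun x => (hE' x).deriv) r 0
    have hE0 : E 0 = 1 - κ * M ^ 2 / 2 := by
      simp [hE_def, hV0, hU0]
    have h1le := capg_sqrt_one_le (V M r)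
    have : Real.sqrt (1 + V M r ^ 2) - κ * U M r ^ 2 / 2 = 1 - κ * M ^ 2 / 2 := by
      rw [← hE0]; exact hconst
    nlinarith
  -- U M stays ≥ M everywhere (connectedness)
  have hUcont : Continuous (U M) :=
    continuous_iff_continuousAt.2 fun r => (hU' M r).continuousAt
  have hUge : ∀ r, M ≤ U M r := by
    have hS : {r : ℝ | M ≤ U M r} = univ := by
      have hTc : IsClosed {r : ℝ | U M r ≤ -M} :=
        isClosed_le hUcont continuous_const
      have hSc : IsClosed {r : ℝ | M ≤ U M r} :=
        isClosed_le continuous_const hUcont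
      have hcompl : {r : ℝ | M ≤ U M r} = {r : ℝ | U M r ≤ -M}ᶜ := by
        ext r
        simp only [mem_setOf_eq, mem_compl_iff, not_le]
        constructor
        · intro h; linarith
        · intro h
          have := hsq r
          nlinarith
      have hclopen : IsClopen {r : ℝ | M ≤ U M r} := by
        constructor
        · exact hSc
        · rw [hcompl]; exact hTc.isOpen_compl
      apply hclopen.eq_univ
      exact ⟨0, by simp [hU0]⟩
    intro r
    have : r ∈ {r : ℝ | M ≤ U M r} := hS ▸ mem_univ r
    exact this
  -- lower bound for V M a
  have hVa : κ * M * a ≤ V M a := by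
    set w : ℝ → ℝ := fun r => V M r - κ * M * r with hw_def
    have hw : ∀ x, HasDerivAt w (κ * U M x - κ * M) x := by
      intro x
      have h2 : HasDerivAt (fun y : ℝ => κ * M * y) (κ * M) x := by
        simpa using (hasDerivAt_id x).const_mul (κ * M)
      exact (hV M x).sub h2
    have hmono : Monotone w := by
      apply monotone_of_deriv_nonneg (fun x => (hw x).differentiableAt)
      intro x
      rw [(hw x).deriv]
      have := hUge x
      nlinarith
    have := hmono ha.le
    simp only [hw_def] at this
    rw [hV0] at this
    simpa using this
  -- F M > tanh β
  have htanh : 0 < Real.tanh β := by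
    rw [Real.tanh_eq_sinh_div_cosh]
    exact div_pos hsinh (Real.cosh_pos β)
  have hFM : Real.tanh β < capg (V M a) := by
    have h1 : κ * M * a = Real.sinh β + 1 := by
      rw [hM_def]
      field_simp
    calc Real.tanh β = capg (Real.sinh β) := (capg_sinh β).symm
      _ < capg (Real.sinh β + 1) := capg_strictMono (by linarith)
      _ = capg (κ * M * a) := by rw [h1]
      _ ≤ capg (V M a) := capg_strictMono.monotone hVa
  -- IVT
  have hFcont : ContinuousOn (fun t => capg (V t a)) (Icc 0 M) :=
    (capg_lipschitz.continuous.comp hφcont).continuousOn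
  have hmem : Real.tanh β ∈ Icc (capg (V 0 a)) (capg (V M a)) := by
    rw [hV0a]
    constructor
    · simpa [capg] using htanh.le
    · exact hFM.le
  obtain ⟨u₀, hu₀mem, hFu₀⟩ := intermediate_value_Icc hM.le hFcont hmem
  have hFu₀' : capg (V u₀ a) = Real.tanh β := hFu₀
  refine ⟨u₀, ?_, ?_⟩
  · rcases lt_or_eq_of_le hu₀mem.1 with h | h
    · exact h
    · exfalso
      have : capg (V 0 a) = Real.tanh β := by rw [h]; exact hFu₀'
      rw [hV0a] at this
      simp [capg] at this
      linarith
  · exact hFu₀'
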